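/- Let π_t and π̃_t be probability measures on a measurable space Ω, set ε_t := ‖π_t − π̃_t‖_TV, and let F : [0,1] × Ω → ℝ be bounded measurable with ‖F(s, ·)‖_∞ ≤ C_ab for all s and sup_ω |F(r, ω) − F(s, ω)| ≤ L_ab |r − s| for all r, s. Fix t and δ ∈ (0, 1] with t + δ ≤ 1, let π_{t+δ} be the Gibbs tilt of π_t by ∫_t^{t+δ} F(r, ·) dr and let π̃_{t+δ} be the Gibbs tilt of π̃_t by δ F(t, ·). Then ε_{t+δ} := ‖π_{t+δ} − π̃_{t+δ}‖_TV ≤ (1 + C₂ δ) ε_t + C₁ δ², where C₁ := (1/2) L_ab e^{L_ab} and C₂ := 4 C_ab e^{2 C_ab}. -/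

import Mathlib

open MeasureTheory

/-- Total variation distance `(1/2) ∫ |dP/dλ − dQ/dλ| dλ` with the common
dominating measure `λ = P + Q`. -/
noncomputable def tvDist {Ω : Type*} [MeasurableSpace Ω]
    (P Q : Measure Ω) : ℝ :=
  (1 / 2) * ∫ ω, |(P.rnDeriv (P + Q) ω).toReal
    - (Q.rnDeriv (P + Q) ω).toReal| ∂(P + Q)

/-- The Gibbs tilt of `π` by `G`: the probability measure with density
`e^G / ∫ e^G dπ` with respect to `π`. -/
noncomputable def gibbsTilt {Ω : Type*} [MeasurableSpace Ω]
    (π : Measure Ω) (G : Ω → ℝ) : Measure Ω :=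
  π.withDensity fun ω =>
    ENNReal.ofReal (Real.exp (G ω) / ∫ ω', Real.exp (G ω') ∂π)

section Auxiliary

open scoped ENNReal NNReal

variable {Ω : Type*} [MeasurableSpace Ω]

lemma exp_sub_one_le_mul (x : ℝ) : Real.exp x - 1 ≤ x * Real.exp x := by
  have hE := Real.exp_pos x
  have h := Real.add_one_le_exp (-x)
  rw [Real.exp_neg] at h
  have h2 : Real.exp x * (-x + 1) ≤ Real.exp x * (Real.exp x)⁻¹ :=
    mul_le_mul_of_nonneg_left h hE.le
  rw [mul_inv_cancel₀ hE.ne'] at h2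
  nlinarith

lemma one_sub_exp_neg_le (x : ℝ) : 1 - Real.exp (-x) ≤ Real.exp x - 1 := by
  have h1 := Real.add_one_le_exp x
  have h2 := Real.add_one_le_exp (-x)
  linarith

lemma my_integrable_of_bounded {μ : Measure Ω} [IsFiniteMeasure μ] {f : Ω → ℝ}
    (hf : Measurable f) {C : ℝ} (h : ∀ ω, |f ω| ≤ C) : Integrable f μ :=
  Integrable.mono' (integrable_const C) hf.aestronglyMeasurable
    (Filter.Eventually.of_forall fun ω => by simpa [Real.norm_eq_abs] using h ω)

lemma integral_withDensity_ofReal {μ : Measure Ω} {w : Ω → ℝ} (hw : Measurable w)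
    (hw0 : ∀ ω, 0 ≤ w ω) (φ : Ω → ℝ) :
    ∫ ω, φ ω ∂(μ.withDensity fun ω => ENNReal.ofReal (w ω)) = ∫ ω, w ω * φ ω ∂μ := by
  have h : (fun ω => ENNReal.ofReal (w ω)) = fun ω => ((w ω).toNNReal : ℝ≥0∞) := rfl
  rw [h, integral_withDensity_eq_integral_smul hw.real_toNNReal]
  refine integral_congr_ae (Filter.Eventually.of_forall fun ω => ?_)
  simp [NNReal.smul_def, Real.coe_toNNReal _ (hw0 ω)]

lemma tvDist_withDensity (μ : Measure Ω) [IsFiniteMeasure μ] {u v : Ω → ℝ}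
    (hu : Measurable u) (hv : Measurable v) (hu0 : ∀ ω, 0 ≤ u ω) (hv0 : ∀ ω, 0 ≤ v ω)
    (hui : Integrable u μ) (hvi : Integrable v μ) :
    tvDist (μ.withDensity fun ω => ENNReal.ofReal (u ω))
      (μ.withDensity fun ω => ENNReal.ofReal (v ω)) = (1 / 2) * ∫ ω, |u ω - v ω| ∂μ := by
  set P := μ.withDensity fun ω => ENNReal.ofReal (u ω) with hPdef
  set Q := μ.withDensity fun ω => ENNReal.ofReal (v ω) with hQdef
  set w : Ω → ℝ := fun ω => u ω + v ω with hwdef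
  have hw : Measurable w := hu.add hv
  have hw0 : ∀ ω, 0 ≤ w ω := fun ω => add_nonneg (hu0 ω) (hv0 ω)
  have hsum : P + Q = μ.withDensity fun ω => ENNReal.ofReal (w ω) := by
    rw [hPdef, hQdef, ← withDensity_add_left (hu.ennreal_ofReal)]
    exact withDensity_congr_ae (Filter.Eventually.of_forall fun ω =>
      (ENNReal.ofReal_add (hu0 ω) (hv0 ω)).symm)
  have hfin : IsFiniteMeasure (μ.withDensity fun ω => ENNReal.ofReal (w ω)) := by
    refine isFiniteMeasure_withDensity ?_
    have : Integrable w μ := hui.add hvi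
    exact (this.lintegral_lt_top).ne
  set h₁ : Ω → ℝ≥0∞ := fun ω => ENNReal.ofReal (u ω / w ω) with hh₁
  set h₂ : Ω → ℝ≥0∞ := fun ω => ENNReal.ofReal (v ω / w ω) with hh₂
  have hh₁m : Measurable h₁ := (hu.div hw).ennreal_ofReal
  have hh₂m : Measurable h₂ := (hv.div hw).ennreal_ofReal
  have key : ∀ (x : Ω → ℝ), Measurable x → (∀ ω, 0 ≤ x ω) → (∀ ω, x ω ≤ w ω) →
      (μ.withDensity fun ω => ENNReal.ofReal (w ω)).withDensity
        (fun ω => ENNReal.ofReal (x ω / w ω)) = μ.withDensity fun ω => ENNReal.ofReal (x ω) := by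
    intro x hx hx0 hxw
    rw [← withDensity_mul μ hw.ennreal_ofReal (g := fun ω => ENNReal.ofReal (x ω / w ω)) (hx.div hw).ennreal_ofReal]
    refine withDensity_congr_ae (Filter.Eventually.of_forall fun ω => ?_)
    simp only [Pi.mul_apply]
    rw [← ENNReal.ofReal_mul (hw0 ω)]
    congr 1
    rcases eq_or_ne (w ω) 0 with h | h
    · have : x ω = 0 := le_antisymm (h ▸ hxw ω) (hx0 ω)
      simp [h, this]
    · field_simp
  have hP' : (μ.withDensity fun ω => ENNReal.ofReal (w ω)).withDensity h₁ = P :=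
    key u hu hu0 fun ω => le_add_of_nonneg_right (hv0 ω)
  have hQ' : (μ.withDensity fun ω => ENNReal.ofReal (w ω)).withDensity h₂ = Q :=
    key v hv hv0 fun ω => le_add_of_nonneg_left (hu0 ω)
  have hPd : P.rnDeriv (P + Q) =ᵐ[P + Q] h₁ := by
    rw [hsum, ← hP']
    exact Measure.rnDeriv_withDensity _ hh₁m
  have hQd : Q.rnDeriv (P + Q) =ᵐ[P + Q] h₂ := by
    rw [hsum, ← hQ']
    exact Measure.rnDeriv_withDensity _ hh₂m
  rw [tvDist]
  have : ∫ ω, |(P.rnDeriv (P + Q) ω).toReal - (Q.rnDeriv (P + Q) ω).toReal| ∂(P + Q)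
      = ∫ ω, |u ω / w ω - v ω / w ω| ∂(P + Q) := by
    refine integral_congr_ae ?_
    filter_upwards [hPd, hQd] with ω h1 h2
    rw [h1, h2, hh₁, hh₂, ENNReal.toReal_ofReal (div_nonneg (hu0 ω) (hw0 ω)),
      ENNReal.toReal_ofReal (div_nonneg (hv0 ω) (hw0 ω))]
  rw [this, hsum, integral_withDensity_ofReal hw hw0]
  congr 1
  refine integral_congr_ae (Filter.Eventually.of_forall fun ω => ?_)
  show w ω * |u ω / w ω - v ω / w ω| = |u ω - v ω|
  rcases eq_or_ne (w ω) 0 with h | h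
  · have h' : u ω + v ω = 0 := h
    have hu' : u ω = 0 := by linarith [hu0 ω, hv0 ω]
    have hv' : v ω = 0 := by linarith [hu0 ω, hv0 ω]
    simp [hu', hv', h]
  · rw [← abs_of_nonneg (hw0 ω), ← abs_mul]
    congr 1
    field_simp
    rw [abs_of_nonneg (hw0 ω)]

lemma gibbsTilt_eq_withDensity (pm lam : Measure Ω) [IsFiniteMeasure pm] [IsFiniteMeasure lam]
    (hac : pm ≪ lam) {G : Ω → ℝ} (hG : Measurable G) :
    gibbsTilt pm G = lam.withDensity fun ω =>
      ENNReal.ofReal ((pm.rnDeriv lam ω).toReal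
        * (Real.exp (G ω) / ∫ ω', Real.exp (G ω') ∂pm)) := by
  set Z : ℝ := ∫ ω', Real.exp (G ω') ∂pm with hZ
  set ρ : Ω → ℝ≥0∞ := fun ω => ENNReal.ofReal (Real.exp (G ω) / Z) with hρ
  have hρm : Measurable ρ := ((Real.measurable_exp.comp hG).div_const Z).ennreal_ofReal
  have h1 : pm = lam.withDensity (pm.rnDeriv lam) := (Measure.withDensity_rnDeriv_eq pm lam hac).symm
  calc gibbsTilt pm G = (lam.withDensity (pm.rnDeriv lam)).withDensity ρ := by
        rw [gibbsTilt, ← h1]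
    _ = lam.withDensity (pm.rnDeriv lam * ρ) :=
        (withDensity_mul lam (Measure.measurable_rnDeriv pm lam) hρm).symm
    _ = _ := by
        refine withDensity_congr_ae ?_
        filter_upwards [Measure.rnDeriv_ne_top pm lam] with ω hω
        simp only [Pi.mul_apply]
        rw [← ENNReal.ofReal_toReal hω, ← ENNReal.ofReal_mul ENNReal.toReal_nonneg,
          ENNReal.toReal_ofReal ENNReal.toReal_nonneg]

lemma integral_rnDeriv_mul (pm lam : Measure Ω) [IsFiniteMeasure pm] [IsFiniteMeasure lam]
    (hac : pm ≪ lam) (φ : Ω → ℝ) :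
    ∫ ω, (pm.rnDeriv lam ω).toReal * φ ω ∂lam = ∫ ω, φ ω ∂pm := by
  simpa [smul_eq_mul] using integral_rnDeriv_smul (f := φ) hac

lemma ratio_abs_bound {A B Z1 Z3 E : ℝ} (hA0 : 0 < A) (hB0 : 0 < B)
    (hZ1 : 0 < Z1) (hZ3 : 0 < Z3) (hE : 1 ≤ E)
    (hAB : A ≤ E * B) (hBA : B ≤ E * A) (h13 : Z1 ≤ E * Z3) (h31 : Z3 ≤ E * Z1) :
    |A / Z1 - B / Z3| ≤ (E * E - 1) * (B / Z3) := by
  have hE0 : (0:ℝ) < E := lt_of_lt_of_le one_pos hE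
  have hA' : A * Z3 ≤ E * E * B * Z1 := by
    calc A * Z3 ≤ (E * B) * (E * Z1) := mul_le_mul hAB h31 hZ3.le (by positivity)
      _ = E * E * B * Z1 := by ring
  have hB' : B * Z1 ≤ E * E * A * Z3 := by
    calc B * Z1 ≤ (E * A) * (E * Z3) := mul_le_mul hBA h13 hZ1.le (by positivity)
      _ = E * E * A * Z3 := by ring
  rw [abs_sub_le_iff]
  constructor
  · rw [div_sub_div _ _ hZ1.ne' hZ3.ne', div_le_iff₀ (mul_pos hZ1 hZ3)]
    have he : (E * E - 1) * (B / Z3) * (Z1 * Z3) = (E * E - 1) * (B * Z1) := by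
      field_simp
    rw [he]
    linarith
  · rw [div_sub_div _ _ hZ3.ne' hZ1.ne', div_le_iff₀ (mul_pos hZ3 hZ1)]
    have he : (E * E - 1) * (B / Z3) * (Z3 * Z1) = (E * E - 1) * (B * Z1) := by
      field_simp
    rw [he]
    nlinarith [hB', mul_nonneg (mul_nonneg hB0.le hZ1.le) (sq_nonneg (E * E - 1)),
      mul_pos hE0 hE0, mul_nonneg hA0.le hZ3.le]

lemma div_le_sq_of {b Z e : ℝ} (he : 1 ≤ e) (hb0 : 0 < b) (hbe : b ≤ e) (hZ : 0 < Z)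
    (hZe : 1 / e ≤ Z) : b / Z ≤ e * e := by
  have he0 : (0:ℝ) < e := lt_of_lt_of_le one_pos he
  rw [div_le_iff₀ hZ]
  calc b ≤ e := hbe
    _ = e * e * (1 / e) := by field_simp
    _ ≤ e * e * Z := mul_le_mul_of_nonneg_left hZe (by positivity)

lemma step_div {D Z I e : ℝ} (hD : D ≤ (e - 1) * I) (hD0 : 0 ≤ D) (hZ : 0 < Z)
    (he : 1 ≤ e) (hZe : 1 / e ≤ Z) (hI : 0 ≤ I) : D / Z ≤ e * (e - 1) * I := by
  have he0 : (0:ℝ) < e := lt_of_lt_of_le one_pos he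
  have h1 : D / Z ≤ D * e := by
    rw [div_le_iff₀ hZ]
    calc D = D * e * (1 / e) := by field_simp
      _ ≤ D * e * Z := mul_le_mul_of_nonneg_left hZe (by positivity)
  calc D / Z ≤ D * e := h1
    _ ≤ ((e - 1) * I) * e := mul_le_mul_of_nonneg_right hD he0.le
    _ = e * (e - 1) * I := by ring

lemma scalar1 {Lab δ : ℝ} (hLab : 0 ≤ Lab) (hδ0 : 0 < δ) (hδ1 : δ ≤ 1) :
    Real.exp (Lab * δ ^ 2) - 1 ≤ Lab * Real.exp Lab * δ ^ 2 := by
  have h1 := exp_sub_one_le_mul (Lab * δ ^ 2)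
  have hy : Lab * δ ^ 2 ≤ Lab := by nlinarith [mul_le_mul_of_nonneg_left (mul_le_mul hδ1 hδ1 hδ0.le zero_le_one) hLab]
  have h2 : Real.exp (Lab * δ ^ 2) ≤ Real.exp Lab := Real.exp_le_exp.2 hy
  have h3 : (0:ℝ) ≤ Lab * δ ^ 2 := mul_nonneg hLab (sq_nonneg δ)
  nlinarith [mul_le_mul_of_nonneg_left h2 h3]

lemma scalar2 {Cab δ : ℝ} (hCab : 0 ≤ Cab) (hδ0 : 0 < δ) (hδ1 : δ ≤ 1) :
    Real.exp (Cab * δ) * Real.exp (Cab * δ) + Real.exp (Cab * δ) * (Real.exp (Cab * δ) - 1)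
      ≤ 1 + 4 * Cab * Real.exp (2 * Cab) * δ := by
  have he2 : Real.exp (Cab * δ) * Real.exp (Cab * δ) = Real.exp (2 * (Cab * δ)) := by
    rw [← Real.exp_add]
    ring_nf
  have h1 := exp_sub_one_le_mul (2 * (Cab * δ))
  have h2 : Real.exp (2 * (Cab * δ)) ≤ Real.exp (2 * Cab) := Real.exp_le_exp.2 (by nlinarith [mul_le_mul_of_nonneg_left hδ1 hCab])
  have h3 : (0:ℝ) ≤ 2 * (Cab * δ) := by positivity
  have h4 : 1 ≤ Real.exp (Cab * δ) := Real.one_le_exp (mul_nonneg hCab hδ0.le)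
  nlinarith [mul_le_mul_of_nonneg_left h2 h3]

end Auxiliary

set_option maxHeartbeats 1000000 in
/-- Recursive error accumulation: one exact Gibbs update of `π_t` by
`∫ₜ^{t+δ} F_r dr` versus one frozen (Euler) update of `π̃_t` by `δ F_t`
satisfies `ε_{t+δ} ≤ (1 + C₂δ) ε_t + C₁δ²` in total variation, where
`C₁ = (1/2) L_ab e^{L_ab}` and `C₂ = 4 C_ab e^{2C_ab}`. -/
theorem error_recursion
    {Ω : Type*} [MeasurableSpace Ω]
    (πt πt' : Measure Ω) [IsProbabilityMeasure πt] [IsProbabilityMeasure πt']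
    (F : ℝ → Ω → ℝ) (hFm : Measurable (Function.uncurry F))
    (Cab : ℝ) (hFb : ∀ s ∈ Set.Icc (0:ℝ) 1, ∀ ω, |F s ω| ≤ Cab)
    (Lab : ℝ)
    (hFlip : ∀ r ∈ Set.Icc (0:ℝ) 1, ∀ s ∈ Set.Icc (0:ℝ) 1, ∀ ω,
      |F r ω - F s ω| ≤ Lab * |r - s|)
    (t δ : ℝ) (ht0 : 0 ≤ t) (hδ0 : 0 < δ) (hδ1 : δ ≤ 1) (htδ : t + δ ≤ 1) :
    tvDist (gibbsTilt πt fun ω => ∫ r in t..(t + δ), F r ω)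
        (gibbsTilt πt' fun ω => δ * F t ω)
      ≤ (1 + (4 * Cab * Real.exp (2 * Cab)) * δ) * tvDist πt πt'
        + ((1 / 2) * Lab * Real.exp Lab) * δ ^ 2 := by
  classical
  set lam : Measure Ω := πt + πt' with hlam
  haveI hlamfin : IsFiniteMeasure lam := by rw [hlam]; infer_instance
  set G : Ω → ℝ := fun ω => ∫ r in t..(t + δ), F r ω with hGdef
  set H : Ω → ℝ := fun ω => δ * F t ω with hHdef
  -- nonemptiness and sign of constants
  have hΩ : Nonempty Ω := by
    by_contra h
    rw [not_nonempty_iff] at h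
    have h1 := measure_univ (μ := πt)
    rw [Set.univ_eq_empty_iff.mpr h] at h1
    simp at h1
  obtain ⟨ω₀⟩ := hΩ
  have htmem : t ∈ Set.Icc (0:ℝ) 1 := ⟨ht0, by linarith⟩
  have hCab : 0 ≤ Cab := le_trans (abs_nonneg _) (hFb t htmem ω₀)
  have hLab : 0 ≤ Lab := by
    have h := hFlip 0 ⟨le_refl 0, zero_le_one⟩ 1 ⟨zero_le_one, le_refl 1⟩ ω₀
    have h2 := abs_nonneg (F 0 ω₀ - F 1 ω₀)
    simp at h
    linarith
  -- measurability
  have hFs : ∀ s, Measurable (fun ω => F s ω) := fun s =>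
    hFm.comp (measurable_prodMk_left)
  have hHm : Measurable H := measurable_const.mul (hFs t)
  have hGm : Measurable G := by
    have he : G = fun ω => ∫ r, F r ω ∂(MeasureTheory.volume.restrict (Set.Ioc t (t + δ))) :=
      funext fun ω => intervalIntegral.integral_of_le (by linarith)
    rw [he]
    exact (hFm.stronglyMeasurable.integral_prod_left
      (μ := MeasureTheory.volume.restrict (Set.Ioc t (t + δ)))).measurable
  -- interval integrability of slices
  have hIIF : ∀ ω, IntervalIntegrable (fun r => F r ω) MeasureTheory.volume t (t + δ) := by
    intro ω
    have hm : Measurable fun r => F r ω := hFm.comp (measurable_id.prodMk measurable_const)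
    rw [intervalIntegrable_iff]
    haveI : IsFiniteMeasure (MeasureTheory.volume.restrict (Set.uIoc t (t + δ))) := by
      constructor
      rw [Measure.restrict_apply_univ]
      exact measure_Ioc_lt_top
    refine Integrable.mono' (integrable_const Cab) hm.aestronglyMeasurable ?_
    refine (MeasureTheory.ae_restrict_mem measurableSet_uIoc).mono fun r hr => ?_
    rw [Set.uIoc_of_le (by linarith : t ≤ t + δ)] at hr
    have hrIcc : r ∈ Set.Icc (0:ℝ) 1 := ⟨by linarith [hr.1], by linarith [hr.2]⟩
    simpa [Real.norm_eq_abs] using hFb r hrIcc ω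
  -- bounds on G and H
  have hGb : ∀ ω, |G ω| ≤ Cab * δ := by
    intro ω
    have h := intervalIntegral.norm_integral_le_of_norm_le_const
      (C := Cab) (f := fun r => F r ω) (a := t) (b := t + δ) ?_
    · rw [Real.norm_eq_abs] at h
      calc |G ω| ≤ Cab * |t + δ - t| := h
        _ = Cab * δ := by rw [show t + δ - t = δ by ring, abs_of_pos hδ0]
    · intro x hx
      rw [Set.uIoc_of_le (by linarith : t ≤ t + δ)] at hx
      have hxIcc : x ∈ Set.Icc (0:ℝ) 1 := ⟨by linarith [hx.1], by linarith [hx.2]⟩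
      simpa [Real.norm_eq_abs] using hFb x hxIcc ω
  have hHb : ∀ ω, |H ω| ≤ Cab * δ := by
    intro ω
    rw [hHdef]
    simp only [abs_mul, abs_of_pos hδ0]
    calc δ * |F t ω| ≤ δ * Cab := by
          exact mul_le_mul_of_nonneg_left (hFb t htmem ω) hδ0.le
      _ = Cab * δ := mul_comm _ _
  have hGH : ∀ ω, |G ω - H ω| ≤ Lab * δ ^ 2 / 2 := by
    intro ω
    have hconst : (∫ _r in t..(t + δ), F t ω) = δ * F t ω := by
      rw [intervalIntegral.integral_const, smul_eq_mul]
      ring_nf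
    have hsub : G ω - H ω = ∫ r in t..(t + δ), (F r ω - F t ω) := by
      rw [intervalIntegral.integral_sub (hIIF ω) intervalIntegrable_const, hconst]
    rw [hsub]
    have h1 : |∫ r in t..(t + δ), (F r ω - F t ω)|
        ≤ ∫ r in t..(t + δ), |F r ω - F t ω| := by
      simpa [Real.norm_eq_abs] using
        intervalIntegral.abs_integral_le_integral_abs (a := t) (b := t + δ)
          (f := fun r => F r ω - F t ω) (by linarith)
    have h2 : (∫ r in t..(t + δ), |F r ω - F t ω|)
        ≤ ∫ r in t..(t + δ), Lab * (r - t) := by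
      refine intervalIntegral.integral_mono_on (by linarith) ?_ ?_ ?_
      · exact ((hIIF ω).sub intervalIntegrable_const).abs
      · exact (Continuous.intervalIntegrable (by continuity) _ _)
      · intro r hr
        have hrIcc : r ∈ Set.Icc (0:ℝ) 1 := ⟨by linarith [hr.1], by linarith [hr.2]⟩
        have := hFlip r hrIcc t htmem ω
        rwa [abs_of_nonneg (by linarith [hr.1] : (0:ℝ) ≤ r - t)] at this
    have h3 : (∫ r in t..(t + δ), Lab * (r - t)) = Lab * (δ ^ 2 / 2) := by
      rw [intervalIntegral.integral_const_mul]
      have h4 : (∫ r in t..(t + δ), (r - t)) = δ ^ 2 / 2 := by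
        rw [intervalIntegral.integral_comp_sub_right (fun x => x) t, integral_id]
        ring_nf
      rw [h4]
    calc |∫ r in t..(t + δ), (F r ω - F t ω)| ≤ ∫ r in t..(t + δ), Lab * (r - t) :=
          le_trans h1 h2
      _ = Lab * δ ^ 2 / 2 := by rw [h3]; ring
  -- absolute continuity and densities wrt lam
  have hacT : πt ≪ lam := Measure.absolutelyContinuous_of_le (Measure.le_add_right le_rfl)
  have hacT' : πt' ≪ lam := Measure.absolutelyContinuous_of_le (Measure.le_add_left le_rfl)
  set p : Ω → ℝ := fun ω => (πt.rnDeriv lam ω).toReal with hpdef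
  set q : Ω → ℝ := fun ω => (πt'.rnDeriv lam ω).toReal with hqdef
  have hpm : Measurable p := (Measure.measurable_rnDeriv πt lam).ennreal_toReal
  have hqm : Measurable q := (Measure.measurable_rnDeriv πt' lam).ennreal_toReal
  have hp0 : ∀ ω, 0 ≤ p ω := fun ω => ENNReal.toReal_nonneg
  have hq0 : ∀ ω, 0 ≤ q ω := fun ω => ENNReal.toReal_nonneg
  have hpi : Integrable p lam := Measure.integrable_toReal_rnDeriv
  have hqi : Integrable q lam := Measure.integrable_toReal_rnDeriv
  have hpint : ∀ φ : Ω → ℝ, ∫ ω, p ω * φ ω ∂lam = ∫ ω, φ ω ∂πt :=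
    fun φ => integral_rnDeriv_mul πt lam hacT φ
  have hqint : ∀ φ : Ω → ℝ, ∫ ω, q ω * φ ω ∂lam = ∫ ω, φ ω ∂πt' :=
    fun φ => integral_rnDeriv_mul πt' lam hacT' φ
  have hp1 : ∫ ω, p ω ∂lam = 1 := by
    have h := hpint fun _ => 1
    simpa using h
  have hq1 : ∫ ω, q ω ∂lam = 1 := by
    have h := hqint fun _ => 1
    simpa using h
  -- exponential weights
  set a : Ω → ℝ := fun ω => Real.exp (G ω) with hadef
  set b : Ω → ℝ := fun ω => Real.exp (H ω) with hbdef
  have ham : Measurable a := Real.measurable_exp.comp hGm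
  have hbm : Measurable b := Real.measurable_exp.comp hHm
  have ha0 : ∀ ω, 0 < a ω := fun ω => Real.exp_pos _
  have hb0 : ∀ ω, 0 < b ω := fun ω => Real.exp_pos _
  set eδ : ℝ := Real.exp (Cab * δ) with heδdef
  have heδ1 : 1 ≤ eδ := Real.one_le_exp (by positivity)
  have haub : ∀ ω, a ω ≤ eδ := fun ω => Real.exp_le_exp.2 ((abs_le.1 (hGb ω)).2)
  have halb : ∀ ω, Real.exp (-(Cab * δ)) ≤ a ω := fun ω =>
    Real.exp_le_exp.2 ((abs_le.1 (hGb ω)).1)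
  have hbub : ∀ ω, b ω ≤ eδ := fun ω => Real.exp_le_exp.2 ((abs_le.1 (hHb ω)).2)
  have hblb : ∀ ω, Real.exp (-(Cab * δ)) ≤ b ω := fun ω =>
    Real.exp_le_exp.2 ((abs_le.1 (hHb ω)).1)
  have haiT : Integrable a πt := my_integrable_of_bounded ham (C := eδ) fun ω => by
    rw [abs_of_pos (ha0 ω)]; exact haub ω
  have hbiT : Integrable b πt := my_integrable_of_bounded hbm (C := eδ) fun ω => by
    rw [abs_of_pos (hb0 ω)]; exact hbub ω
  have hbiT' : Integrable b πt' := my_integrable_of_bounded hbm (C := eδ) fun ω => by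
    rw [abs_of_pos (hb0 ω)]; exact hbub ω
  have hbilam : Integrable b lam := my_integrable_of_bounded hbm (C := eδ) fun ω => by
    rw [abs_of_pos (hb0 ω)]; exact hbub ω
  -- normalizers
  set Z1 : ℝ := ∫ ω', Real.exp (G ω') ∂πt with hZ1def
  set Z2 : ℝ := ∫ ω', Real.exp (H ω') ∂πt' with hZ2def
  set Z3 : ℝ := ∫ ω', Real.exp (H ω') ∂πt with hZ3def
  have hZ1a : Z1 = ∫ ω, a ω ∂πt := rfl
  have hZ2b : Z2 = ∫ ω, b ω ∂πt' := rfl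
  have hZ3b : Z3 = ∫ ω, b ω ∂πt := rfl
  have hZ1lb : Real.exp (-(Cab * δ)) ≤ Z1 := by
    rw [hZ1a]
    calc Real.exp (-(Cab * δ)) = ∫ _ω, Real.exp (-(Cab * δ)) ∂πt := by simp
      _ ≤ ∫ ω, a ω ∂πt := integral_mono (integrable_const _) haiT halb
  have hZ2lb : Real.exp (-(Cab * δ)) ≤ Z2 := by
    rw [hZ2b]
    calc Real.exp (-(Cab * δ)) = ∫ _ω, Real.exp (-(Cab * δ)) ∂πt' := by simp
      _ ≤ ∫ ω, b ω ∂πt' := integral_mono (integrable_const _) hbiT' hblb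
  have hZ3lb : Real.exp (-(Cab * δ)) ≤ Z3 := by
    rw [hZ3b]
    calc Real.exp (-(Cab * δ)) = ∫ _ω, Real.exp (-(Cab * δ)) ∂πt := by simp
      _ ≤ ∫ ω, b ω ∂πt := integral_mono (integrable_const _) hbiT hblb
  have hZ1pos : 0 < Z1 := lt_of_lt_of_le (Real.exp_pos _) hZ1lb
  have hZ2pos : 0 < Z2 := lt_of_lt_of_le (Real.exp_pos _) hZ2lb
  have hZ3pos : 0 < Z3 := lt_of_lt_of_le (Real.exp_pos _) hZ3lb
  -- comparison of Z1 and Z3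
  set η : ℝ := Lab * δ ^ 2 / 2 with hηdef
  have hη0 : 0 ≤ η := by positivity
  set Eη : ℝ := Real.exp η with hEηdef
  have hEη1 : 1 ≤ Eη := Real.one_le_exp hη0
  have haEb : ∀ ω, a ω ≤ Eη * b ω := by
    intro ω
    have h : a ω = Real.exp (G ω - H ω) * b ω := by
      rw [hadef, hbdef, ← Real.exp_add, sub_add_cancel]
    rw [h]
    exact mul_le_mul_of_nonneg_right
      (Real.exp_le_exp.2 ((abs_le.1 (hGH ω)).2)) (hb0 ω).le
  have hbEa : ∀ ω, b ω ≤ Eη * a ω := by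
    intro ω
    have h : b ω = Real.exp (H ω - G ω) * a ω := by
      rw [hadef, hbdef, ← Real.exp_add, sub_add_cancel]
    rw [h]
    refine mul_le_mul_of_nonneg_right (Real.exp_le_exp.2 ?_) (ha0 ω).le
    have := (abs_le.1 (hGH ω)).1
    rw [hηdef]
    linarith
  have hZ13 : Z1 ≤ Eη * Z3 := by
    rw [hZ1a, hZ3b]
    calc (∫ ω, a ω ∂πt) ≤ ∫ ω, Eη * b ω ∂πt :=
          integral_mono haiT (hbiT.const_mul Eη) haEb
      _ = Eη * ∫ ω, b ω ∂πt := integral_const_mul _ _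
  have hZ31 : Z3 ≤ Eη * Z1 := by
    rw [hZ1a, hZ3b]
    calc (∫ ω, b ω ∂πt) ≤ ∫ ω, Eη * a ω ∂πt :=
          integral_mono hbiT (haiT.const_mul Eη) hbEa
      _ = Eη * ∫ ω, a ω ∂πt := integral_const_mul _ _
  -- densities of the tilted measures
  set u : Ω → ℝ := fun ω => p ω * (a ω / Z1) with hudef
  set v : Ω → ℝ := fun ω => q ω * (b ω / Z2) with hvdef
  set m : Ω → ℝ := fun ω => p ω * (b ω / Z3) with hmdef
  have hum : Measurable u := hpm.mul (ham.div_const Z1)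
  have hvm : Measurable v := hqm.mul (hbm.div_const Z2)
  have hmm : Measurable m := hpm.mul (hbm.div_const Z3)
  have hu0 : ∀ ω, 0 ≤ u ω := fun ω => mul_nonneg (hp0 ω) (div_nonneg (ha0 ω).le hZ1pos.le)
  have hv0 : ∀ ω, 0 ≤ v ω := fun ω => mul_nonneg (hq0 ω) (div_nonneg (hb0 ω).le hZ2pos.le)
  have hm0 : ∀ ω, 0 ≤ m ω := fun ω => mul_nonneg (hp0 ω) (div_nonneg (hb0 ω).le hZ3pos.le)
  have hui : Integrable u lam := by
    have h := Integrable.bdd_mul (f := fun ω => a ω / Z1) hpi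
      (ham.div_const Z1).aestronglyMeasurable
      (c := eδ / Z1) (Filter.Eventually.of_forall fun ω => by
        rw [Real.norm_eq_abs, abs_of_nonneg (div_nonneg (ha0 ω).le hZ1pos.le)]
        gcongr
        exact haub ω)
    exact h.congr (Filter.Eventually.of_forall fun ω => mul_comm _ _)
  have hvi : Integrable v lam := by
    have h := Integrable.bdd_mul (f := fun ω => b ω / Z2) hqi
      (hbm.div_const Z2).aestronglyMeasurable
      (c := eδ / Z2) (Filter.Eventually.of_forall fun ω => by
        rw [Real.norm_eq_abs, abs_of_nonneg (div_nonneg (hb0 ω).le hZ2pos.le)]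
        gcongr
        exact hbub ω)
    exact h.congr (Filter.Eventually.of_forall fun ω => mul_comm _ _)
  have hmi : Integrable m lam := by
    have h := Integrable.bdd_mul (f := fun ω => b ω / Z3) hpi
      (hbm.div_const Z3).aestronglyMeasurable
      (c := eδ / Z3) (Filter.Eventually.of_forall fun ω => by
        rw [Real.norm_eq_abs, abs_of_nonneg (div_nonneg (hb0 ω).le hZ3pos.le)]
        gcongr
        exact hbub ω)
    exact h.congr (Filter.Eventually.of_forall fun ω => mul_comm _ _)
  -- identify the LHS
  have hLHS : tvDist (gibbsTilt πt G) (gibbsTilt πt' H)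
      = (1 / 2) * ∫ ω, |u ω - v ω| ∂lam := by
    rw [gibbsTilt_eq_withDensity πt lam hacT hGm, gibbsTilt_eq_withDensity πt' lam hacT' hHm]
    exact tvDist_withDensity lam hum hvm hu0 hv0 hui hvi
  -- triangle inequality through the middle density m
  have humv : Integrable (fun ω => |u ω - m ω|) lam := (hui.sub hmi).abs
  have hmvv : Integrable (fun ω => |m ω - v ω|) lam := (hmi.sub hvi).abs
  have htri : ∫ ω, |u ω - v ω| ∂lam
      ≤ (∫ ω, |u ω - m ω| ∂lam) + ∫ ω, |m ω - v ω| ∂lam := by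
    calc ∫ ω, |u ω - v ω| ∂lam ≤ ∫ ω, (|u ω - m ω| + |m ω - v ω|) ∂lam :=
          integral_mono (hui.sub hvi).abs (humv.add hmvv) fun ω => abs_sub_le _ _ _
      _ = _ := integral_add humv hmvv
  -- total mass of m
  have hmint : ∫ ω, m ω ∂lam = 1 := by
    have h1 : ∫ ω, p ω * (b ω / Z3) ∂lam = ∫ ω, b ω / Z3 ∂πt := hpint _
    have h2 : ∫ ω, b ω / Z3 ∂πt = (∫ ω, b ω ∂πt) / Z3 := integral_div _ _
    calc ∫ ω, m ω ∂lam = ∫ ω, b ω / Z3 ∂πt := h1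
      _ = (∫ ω, b ω ∂πt) / Z3 := h2
      _ = 1 := by rw [← hZ3b, div_self hZ3pos.ne']
  -- truncation error bound
  have hEη2 : Eη * Eη = Real.exp (Lab * δ ^ 2) := by
    rw [hEηdef, ← Real.exp_add, hηdef]
    ring_nf
  have hptw : ∀ ω, |u ω - m ω| ≤ (Eη * Eη - 1) * m ω := by
    intro ω
    have h3 : |a ω / Z1 - b ω / Z3| ≤ (Eη * Eη - 1) * (b ω / Z3) :=
      ratio_abs_bound (ha0 ω) (hb0 ω) hZ1pos hZ3pos hEη1 (haEb ω) (hbEa ω) hZ13 hZ31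
    calc |u ω - m ω| = p ω * |a ω / Z1 - b ω / Z3| := by
          rw [hudef, hmdef]
          simp only
          rw [← mul_sub, abs_mul, abs_of_nonneg (hp0 ω)]
      _ ≤ p ω * ((Eη * Eη - 1) * (b ω / Z3)) := mul_le_mul_of_nonneg_left h3 (hp0 ω)
      _ = (Eη * Eη - 1) * m ω := by rw [hmdef]; ring
  have htrunc : ∫ ω, |u ω - m ω| ∂lam ≤ Real.exp (Lab * δ ^ 2) - 1 := by
    calc ∫ ω, |u ω - m ω| ∂lam ≤ ∫ ω, (Eη * Eη - 1) * m ω ∂lam :=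
          integral_mono humv (hmi.const_mul _) hptw
      _ = (Eη * Eη - 1) * ∫ ω, m ω ∂lam := integral_const_mul _ _
      _ = Real.exp (Lab * δ ^ 2) - 1 := by rw [hmint, hEη2, mul_one]
  -- propagation bound
  set I : ℝ := ∫ ω, |p ω - q ω| ∂lam with hIdef
  have hIint : Integrable (fun ω => |p ω - q ω|) lam := (hpi.sub hqi).abs
  have hI0 : 0 ≤ I := integral_nonneg fun ω => abs_nonneg _
  have hqbi : Integrable (fun ω => q ω * b ω) lam := by
    have h := Integrable.bdd_mul hqi hbm.aestronglyMeasurable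
      (c := eδ) (Filter.Eventually.of_forall fun ω => by rw [Real.norm_eq_abs, abs_of_pos (hb0 ω)]; exact hbub ω)
    exact h.congr (Filter.Eventually.of_forall fun ω => mul_comm _ _)
  have hpbi : Integrable (fun ω => p ω * b ω) lam := by
    have h := Integrable.bdd_mul hpi hbm.aestronglyMeasurable
      (c := eδ) (Filter.Eventually.of_forall fun ω => by rw [Real.norm_eq_abs, abs_of_pos (hb0 ω)]; exact hbub ω)
    exact h.congr (Filter.Eventually.of_forall fun ω => mul_comm _ _)
  have hqb : ∫ ω, q ω * b ω ∂lam = Z2 := (hqint b).trans hZ2b.symm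
  have hpb : ∫ ω, p ω * b ω ∂lam = Z3 := (hpint b).trans hZ3b.symm
  have hbm1 : ∀ ω, |b ω - 1| ≤ eδ - 1 := by
    intro ω
    refine abs_le.2 ⟨?_, by linarith only [hbub ω]⟩
    have h1 := hblb ω
    have h2 := one_sub_exp_neg_le (Cab * δ)
    rw [← heδdef] at h2
    linarith only [h1, h2]
  have hZ23 : |Z2 - Z3| ≤ (eδ - 1) * I := by
    have hdiff : Z2 - Z3 = ∫ ω, (q ω - p ω) * (b ω - 1) ∂lam := by
      have h1 : ∀ ω, (q ω - p ω) * (b ω - 1)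
          = (q ω * b ω - p ω * b ω) - (q ω - p ω) := by intro ω; ring
      have h2 : ∫ ω, (q ω - p ω) * (b ω - 1) ∂lam
          = ∫ ω, ((q ω * b ω - p ω * b ω) - (q ω - p ω)) ∂lam :=
        integral_congr_ae (Filter.Eventually.of_forall fun ω => h1 ω)
      have hint1 : Integrable (fun ω => q ω * b ω - p ω * b ω) lam := hqbi.sub hpbi
      have hint2 : Integrable (fun ω => q ω - p ω) lam := hqi.sub hpi
      rw [h2, integral_sub hint1 hint2, integral_sub hqbi hpbi,
        integral_sub hqi hpi, hqb, hpb, hp1, hq1]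
      ring
    rw [hdiff]
    have h3 : |∫ ω, (q ω - p ω) * (b ω - 1) ∂lam|
        ≤ ∫ ω, |q ω - p ω| * |b ω - 1| ∂lam := by
      simpa [Real.norm_eq_abs, abs_mul] using
        norm_integral_le_integral_norm (μ := lam) (f := fun ω => (q ω - p ω) * (b ω - 1))
    refine h3.trans ?_
    have hqpb : Integrable (fun ω => (q ω - p ω) * (b ω - 1)) lam := by
      have h := Integrable.bdd_mul (hqi.sub hpi)
        (hbm.sub measurable_const).aestronglyMeasurable
        (c := eδ - 1) (Filter.Eventually.of_forall fun ω => by rw [Real.norm_eq_abs]; exact hbm1 ω)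
      exact h.congr (Filter.Eventually.of_forall fun ω => mul_comm _ _)
    have hqpb' : Integrable (fun ω => |q ω - p ω| * |b ω - 1|) lam :=
      hqpb.abs.congr (Filter.Eventually.of_forall fun ω => abs_mul _ _)
    calc ∫ ω, |q ω - p ω| * |b ω - 1| ∂lam
        ≤ ∫ ω, (eδ - 1) * |p ω - q ω| ∂lam := by
          refine integral_mono hqpb' (hIint.const_mul _) ?_
          intro ω
          show |q ω - p ω| * |b ω - 1| ≤ (eδ - 1) * |p ω - q ω|
          rw [abs_sub_comm (q ω) (p ω)]
          calc |p ω - q ω| * |b ω - 1| ≤ |p ω - q ω| * (eδ - 1) :=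
                mul_le_mul_of_nonneg_left (hbm1 ω) (abs_nonneg _)
            _ = (eδ - 1) * |p ω - q ω| := mul_comm _ _
      _ = (eδ - 1) * I := integral_const_mul _ _
  have hmvptw : ∀ ω, |m ω - v ω| ≤ (eδ * eδ) * |p ω - q ω|
      + |1 / Z3 - 1 / Z2| * (q ω * b ω) := by
    intro ω
    have hsplit : m ω - v ω = (b ω / Z3) * (p ω - q ω) + (1 / Z3 - 1 / Z2) * (q ω * b ω) := by
      rw [hmdef, hvdef]
      simp only
      field_simp
      ring
    rw [hsplit]
    refine (abs_add_le _ _).trans ?_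
    have hZ3e : (1:ℝ) / eδ ≤ Z3 := by
      rw [one_div, heδdef, ← Real.exp_neg]
      exact hZ3lb
    have h1 : |(b ω / Z3) * (p ω - q ω)| ≤ (eδ * eδ) * |p ω - q ω| := by
      rw [abs_mul]
      refine mul_le_mul_of_nonneg_right ?_ (abs_nonneg _)
      rw [abs_of_nonneg (div_nonneg (hb0 ω).le hZ3pos.le)]
      exact div_le_sq_of heδ1 (hb0 ω) (hbub ω) hZ3pos hZ3e
    have h2 : |(1 / Z3 - 1 / Z2) * (q ω * b ω)| = |1 / Z3 - 1 / Z2| * (q ω * b ω) := by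
      rw [abs_mul, abs_of_nonneg (mul_nonneg (hq0 ω) (hb0 ω).le)]
    linarith only [h1, h2.le, h2.ge]
  have hprop : ∫ ω, |m ω - v ω| ∂lam ≤ (eδ * eδ) * I + (eδ * (eδ - 1)) * I := by
    have hint2 : Integrable (fun ω => (eδ * eδ) * |p ω - q ω|
        + |1 / Z3 - 1 / Z2| * (q ω * b ω)) lam :=
      (hIint.const_mul _).add (hqbi.const_mul _)
    calc ∫ ω, |m ω - v ω| ∂lam
        ≤ ∫ ω, ((eδ * eδ) * |p ω - q ω| + |1 / Z3 - 1 / Z2| * (q ω * b ω)) ∂lam :=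
          integral_mono hmvv hint2 hmvptw
      _ = (eδ * eδ) * I + |1 / Z3 - 1 / Z2| * Z2 := by
          rw [integral_add (hIint.const_mul _) (hqbi.const_mul _),
            integral_const_mul, integral_const_mul, hqb]
      _ ≤ (eδ * eδ) * I + (eδ * (eδ - 1)) * I := by
          have key : |1 / Z3 - 1 / Z2| * Z2 ≤ (eδ * (eδ - 1)) * I := by
            have h1 : |1 / Z3 - 1 / Z2| * Z2 = |Z2 - Z3| / Z3 := by
              have hd : 1 / Z3 - 1 / Z2 = (Z2 - Z3) / (Z3 * Z2) := by
                field_simp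
              rw [hd, abs_div, abs_of_pos (mul_pos hZ3pos hZ2pos)]
              field_simp
            have hZ3e : (1:ℝ) / eδ ≤ Z3 := by
              rw [one_div, heδdef, ← Real.exp_neg]
              exact hZ3lb
            rw [h1]
            exact step_div hZ23 (abs_nonneg _) hZ3pos heδ1 hZ3e hI0
          linarith only [key]
  -- put everything together
  have hε : tvDist πt πt' = (1 / 2) * I := rfl
  have hS1 : Real.exp (Lab * δ ^ 2) - 1 ≤ Lab * Real.exp Lab * δ ^ 2 := scalar1 hLab hδ0 hδ1
  have hS2 : eδ * eδ + eδ * (eδ - 1) ≤ 1 + 4 * Cab * Real.exp (2 * Cab) * δ := by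
    rw [heδdef]
    exact scalar2 hCab hδ0 hδ1
  have hS2I := mul_le_mul_of_nonneg_right hS2 hI0
  rw [hε]
  calc tvDist (gibbsTilt πt G) (gibbsTilt πt' H) = (1 / 2) * ∫ ω, |u ω - v ω| ∂lam := hLHS
    _ ≤ (1 / 2) * ((Real.exp (Lab * δ ^ 2) - 1) + ((eδ * eδ) * I + (eδ * (eδ - 1)) * I)) := by
        linarith only [htri, htrunc, hprop]
    _ ≤ (1 + 4 * Cab * Real.exp (2 * Cab) * δ) * ((1 / 2) * I)
        + (1 / 2) * Lab * Real.exp Lab * δ ^ 2 := by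
        linarith only [hS1, hS2I, hI0]
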